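/- Let m ≥ 1 and let l₁, …, l_m be pairwise distinct complex numbers. Then Σ_{i=1}^{m} (lᵢ + m − 1) ∏_{j≠i} (1 − 1/(lᵢ − lⱼ)) = Σ_{i=1}^{m} lᵢ + m(m−1)/2. -/

import Mathlib

open Polynomial Finset

lemma coeff_basis_top {F : Type*} [Field F] {ι : Type*} [DecidableEq ι] {s : Finset ι} {v : ι → F}
    (hvs : Set.InjOn v s) {i : ι} (hi : i ∈ s) :
    (Lagrange.basis s v i).coeff (#s - 1) = ∏ j ∈ s.erase i, (v i - v j)⁻¹ := by
  have hd := Lagrange.natDegree_basis hvs hi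
  rw [← hd, Polynomial.coeff_natDegree, Lagrange.basis, leadingCoeff_prod]
  refine prod_congr rfl fun j hj => ?_
  rw [Lagrange.basisDivisor, leadingCoeff_mul, leadingCoeff_C,
    (monic_X_sub_C _).leadingCoeff, mul_one]

lemma sum_eval_mul_prod_inv {F : Type*} [Field F] {ι : Type*} [DecidableEq ι] {s : Finset ι}
    {v : ι → F} (hvs : Set.InjOn v s) {f : F[X]} (hf : f.degree < #s) :
    ∑ i ∈ s, f.eval (v i) * ∏ j ∈ s.erase i, (v i - v j)⁻¹ = f.coeff (#s - 1) := by
  conv_rhs => rw [Lagrange.eq_interpolate hvs hf]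
  rw [Lagrange.interpolate_apply, finset_sum_coeff]
  refine sum_congr rfl fun i hi => ?_
  rw [coeff_C_mul, coeff_basis_top hvs hi]

lemma keyT {F : Type*} [Field F] {ι : Type*} [DecidableEq ι] {s : Finset ι}
    {v : ι → F} (hvs : Set.InjOn v s) (c : F) (h2 : 2 ≤ #s) :
    ∑ i ∈ s, (v i + c) * ∏ j ∈ s.erase i, (v i - v j)⁻¹ = if #s = 2 then 1 else 0 := by
  have hnt : Nontrivial F := inferInstance
  have hdeg : (X + C c : F[X]).degree < (#s : ℕ) := by
    rw [degree_X_add_C]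
    exact_mod_cast Nat.lt_of_lt_of_le one_lt_two h2
  have h := sum_eval_mul_prod_inv hvs hdeg
  simp only [eval_add, eval_X, eval_C] at h
  rw [h, coeff_add, coeff_X, coeff_C]
  have h1 : ¬ (#s - 1 = 0) := by omega
  rw [if_neg h1, add_zero]
  by_cases h2' : #s = 2
  · rw [if_pos h2', if_pos (by omega)]
  · rw [if_neg h2', if_neg (by omega)]

theorem stmt14 (m : ℕ) (hm : 1 ≤ m) (l : Fin m → ℂ) (hl : Function.Injective l) :
    ∑ i : Fin m, (l i + (m : ℂ) - 1) * ∏ j ∈ Finset.univ.erase i, (1 - 1/(l i - l j))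
      = (∑ i : Fin m, l i) + (m : ℂ) * ((m : ℂ) - 1) / 2 := by
  classical
  set c : ℂ := (m : ℂ) - 1 with hc
  set F : Fin m → Finset (Fin m) → ℂ :=
    fun i t => (l i + c) * ∏ j ∈ t, -(l i - l j)⁻¹ with hF
  have step1 : ∀ i : Fin m,
      (l i + (m : ℂ) - 1) * ∏ j ∈ Finset.univ.erase i, (1 - 1/(l i - l j))
        = ∑ t ∈ (Finset.univ.erase i).powerset, F i t := by
    intro i
    have : ∏ j ∈ Finset.univ.erase i, (1 - 1/(l i - l j))
        = ∑ t ∈ (Finset.univ.erase i).powerset, ∏ j ∈ t, -(l i - l j)⁻¹ := by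
      have := Finset.prod_add (fun j => -(l i - l j)⁻¹) (fun _ => (1:ℂ))
        (Finset.univ.erase i)
      simp only [Finset.prod_const_one, mul_one] at this
      rw [← this]
      refine prod_congr rfl fun j hj => by rw [one_div]; ring
    rw [this, Finset.mul_sum]
    refine sum_congr rfl fun t ht => by rw [hF, hc]; ring_nf
  rw [Finset.sum_congr rfl fun i _ => step1 i]
  -- reindex
  have step2 : ∑ i : Fin m, ∑ t ∈ (Finset.univ.erase i).powerset, F i t
      = ∑ T ∈ (Finset.univ : Finset (Fin m)).powerset, ∑ i ∈ T, F i (T.erase i) := by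
    rw [Finset.sum_sigma' _ _ (fun i t => F i t)]
    have hb : ∑ x ∈ (Finset.univ : Finset (Fin m)).sigma (fun i => (Finset.univ.erase i).powerset),
        F x.1 x.2
        = ∑ x ∈ ((Finset.univ : Finset (Fin m)).powerset).sigma (fun T => T),
            F x.2 (x.1.erase x.2) := by
      refine Finset.sum_nbij' (fun p => ⟨insert p.1 p.2, p.1⟩) (fun p => ⟨p.2, p.1.erase p.2⟩)
        ?_ ?_ ?_ ?_ ?_
      · rintro ⟨i, t⟩ hp
        simp only [Finset.mem_sigma, Finset.mem_powerset, Finset.mem_univ, true_and] at hp ⊢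
        exact ⟨Finset.subset_univ _, Finset.mem_insert_self _ _⟩
      · rintro ⟨T, i⟩ hp
        simp only [Finset.mem_sigma, Finset.mem_powerset, Finset.mem_univ, true_and] at hp ⊢
        intro j hj
        simp only [Finset.mem_erase] at hj ⊢
        exact ⟨hj.1, Finset.mem_univ _⟩
      · rintro ⟨i, t⟩ hp
        simp only [Finset.mem_sigma, Finset.mem_powerset, Finset.mem_univ, true_and] at hp
        have hit : i ∉ t := fun h => (Finset.mem_erase.mp (hp h)).1 rfl
        simp [Finset.erase_insert hit]
      · rintro ⟨T, i⟩ hp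
        simp only [Finset.mem_sigma, Finset.mem_powerset] at hp
        simp [Finset.insert_erase hp.2]
      · rintro ⟨i, t⟩ hp
        simp only [Finset.mem_sigma, Finset.mem_powerset, Finset.mem_univ, true_and] at hp
        have hit : i ∉ t := fun h => (Finset.mem_erase.mp (hp h)).1 rfl
        simp [Finset.erase_insert hit]
    rw [hb, Finset.sum_sigma]
  rw [step2]
  -- evaluate inner sums
  have step3 : ∀ T ∈ (Finset.univ : Finset (Fin m)).powerset,
      ∑ i ∈ T, F i (T.erase i)
        = (if #T = 1 then ∑ i ∈ T, (l i + c) else 0) + (if #T = 2 then -1 else 0) := by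
    intro T _
    rcases Nat.lt_or_ge #T 2 with h2 | h2
    · interval_cases h : #T
      · rw [Finset.card_eq_zero.mp h]
        simp
      · obtain ⟨a, rfl⟩ := Finset.card_eq_one.mp h
        simp [hF]
    · have hinner : ∀ i ∈ T, F i (T.erase i)
          = (-1)^(#T - 1) * ((l i + c) * ∏ j ∈ T.erase i, (l i - l j)⁻¹) := by
        intro i hi
        rw [hF]
        simp only [neg_eq_neg_one_mul ((_ : ℂ)⁻¹), Finset.prod_mul_distrib,
          Finset.prod_const, Finset.card_erase_of_mem hi]
        ring
      rw [Finset.sum_congr rfl hinner, ← Finset.mul_sum,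
        keyT (hl.injOn) c h2]
      rcases eq_or_ne #T 2 with h | h
      · rw [if_pos h, if_neg (by omega), h]
        norm_num
      · rw [if_neg h, if_neg (by omega), if_neg (by omega)]
        simp
  rw [Finset.sum_congr rfl step3, Finset.sum_add_distrib]
  -- first sum: singletons
  have e1 : ∑ T ∈ (Finset.univ : Finset (Fin m)).powerset,
      (if #T = 1 then ∑ i ∈ T, (l i + c) else 0)
      = ∑ i : Fin m, (l i + c) := by
    rw [← Finset.sum_filter, ← Finset.powersetCard_eq_filter,
      Finset.powersetCard_one, Finset.sum_map]
    simp
  have e2 : ∑ T ∈ (Finset.univ : Finset (Fin m)).powerset,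
      (if #T = 2 then (-1 : ℂ) else 0)
      = -(m.choose 2 : ℂ) := by
    rw [← Finset.sum_filter, ← Finset.powersetCard_eq_filter,
      Finset.sum_const, Finset.card_powersetCard, Finset.card_univ, Fintype.card_fin]
    simp
  rw [e1, e2]
  have hch : ((m.choose 2 : ℕ) : ℂ) * 2 = (m : ℂ) * ((m : ℂ) - 1) := by
    have : m.choose 2 * 2 = m * (m - 1) := by
      rw [Nat.choose_two_right, Nat.div_mul_cancel]
      rcases Nat.even_or_odd m with h | h
      · exact Dvd.dvd.mul_right h.two_dvd _
      · exact Dvd.dvd.mul_left (Nat.Odd.sub_odd h odd_one).two_dvd _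
    have := congrArg (fun n : ℕ => (n : ℂ)) this
    push_cast [Nat.cast_sub hm] at this
    exact this
  rw [Finset.sum_add_distrib, Finset.sum_const, Finset.card_univ, Fintype.card_fin, hc]
  linear_combination -hch / 2
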